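/- (Envy-Balancing Lemma) Consider a temporal fair division instance with two agents. Suppose that for each day t ∈ [k] we are given two EF1 allocations B_t and B'_t of the set of goods M_t that cancel out. Then there exists an allocation A of M = ∪_{t∈[k]} M_t such that A is EF1 up to each day and A_{M_t} ∈ {B_t, B'_t} for every day t ∈ [k]. -/
import Mathlib

open Finset
open scoped Classical

set_option linter.unusedSectionVars false

noncomputable section

/-- Total value of a bundle `X` under additive valuation `v`. -/
def totalVal {G : Type*} (v : G → ℝ) (X : Finset G) : ℝ := ∑ g ∈ X, v g

/-- `A` is an allocation of the set of goods `S` among `n` agents. -/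
def IsAlloc {G : Type*} (n : ℕ) (S : Finset G) (A : Fin n → Finset G) : Prop :=
  (∀ i j : Fin n, i ≠ j → Disjoint (A i) (A j)) ∧ Finset.univ.biUnion A = S

/-- The allocation `A` is EF1 (envy-free up to one good). -/
def EF1 {G : Type*} [DecidableEq G] (n : ℕ) (v : Fin n → G → ℝ)
    (A : Fin n → Finset G) : Prop :=
  ∀ i j : Fin n, A j ≠ ∅ → ∃ g ∈ A j, totalVal (v i) ((A j).erase g) ≤ totalVal (v i) (A i)

/-- The union of the goods of the first days, up to and including day `t`. -/
def upTo {G : Type*} [DecidableEq G] {k : ℕ} (M : Fin k → Finset G) (t : Fin k) : Finset G :=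
  (Finset.Iic t).biUnion M

section EnvyBalancingAux

variable {G : Type*} [DecidableEq G] {k : ℕ} {M : Fin k → Finset G}
  {v : Fin 2 → G → ℝ} {B B' : Fin k → Fin 2 → Finset G}

/-- Numeric version of "EF1 from agent-with-valuation `v`'s perspective". -/
def numEF1 (v : G → ℝ) (own opp : Finset G) : Prop :=
  totalVal v opp ≤ totalVal v own ∨ ∃ g ∈ opp, totalVal v opp - v g ≤ totalVal v own

lemma totalVal_union (v : G → ℝ) {s t : Finset G} (h : Disjoint s t) :
    totalVal v (s ∪ t) = totalVal v s + totalVal v t := Finset.sum_union h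

lemma totalVal_erase (v : G → ℝ) {s : Finset G} {g : G} (h : g ∈ s) :
    totalVal v (s.erase g) = totalVal v s - v g := by
  have h2 := Finset.sum_erase_add s v h
  unfold totalVal
  linarith

lemma totalVal_nonneg (v : G → ℝ) {s : Finset G} (h : ∀ g ∈ s, 0 ≤ v g) :
    0 ≤ totalVal v s := Finset.sum_nonneg h

lemma totalVal_empty (v : G → ℝ) : totalVal v (∅ : Finset G) = 0 := by simp [totalVal]

/-- Key gluing lemma: a `numEF1` piece together with a piece in which the agent
does not envy is again `numEF1`. -/
lemma numEF1_glue (v : G → ℝ) {Uo Up Wo Wp : Finset G}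
    (hU : numEF1 v Uo Up) (hW : totalVal v Wp ≤ totalVal v Wo)
    (hdo : Disjoint Uo Wo) (hdp : Disjoint Up Wp) :
    numEF1 v (Uo ∪ Wo) (Up ∪ Wp) := by
  rcases hU with h | ⟨g, hg, h⟩
  · left
    rw [totalVal_union v hdo, totalVal_union v hdp]
    linarith
  · right
    refine ⟨g, Finset.mem_union_left _ hg, ?_⟩
    rw [totalVal_union v hdo, totalVal_union v hdp]
    linarith

lemma fin2_cases {P : Fin 2 → Prop} (h0 : P 0) (h1 : P 1) : ∀ i, P i := by
  intro i
  fin_cases i <;> assumption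

lemma EF1_of_numEF1 (v : Fin 2 → G → ℝ) (A : Fin 2 → Finset G)
    (hnn : ∀ (i j : Fin 2), ∀ g ∈ A j, 0 ≤ v i g)
    (h : ∀ i : Fin 2, numEF1 (v i) (A i) (A (1 - i))) : EF1 2 v A := by
  intro i j hj
  obtain ⟨g0, hg0⟩ := Finset.nonempty_iff_ne_empty.2 hj
  by_cases hij : j = i
  · subst hij
    refine ⟨g0, hg0, ?_⟩
    rw [totalVal_erase _ hg0]
    have := hnn j j g0 hg0
    linarith
  · have hj1 : j = 1 - i := by
      have h2 : ∀ a b : Fin 2, b ≠ a → b = 1 - a := by decide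
      exact h2 i j hij
    subst hj1
    rcases h i with hle | ⟨g, hg, hle⟩
    · refine ⟨g0, hg0, ?_⟩
      rw [totalVal_erase _ hg0]
      have := hnn i _ g0 hg0
      linarith
    · exact ⟨g, hg, by rw [totalVal_erase _ hg]; linarith⟩

/-- The allocation of day `t` determined by the boolean choice `c`. -/
def dayAlloc (B B' : Fin k → Fin 2 → Finset G) : Bool → Fin k → Fin 2 → Finset G
  | false, t, i => B t i
  | true, t, i => B' t i

/-- The days with index `< n`. -/
def prefSet (k n : ℕ) : Finset (Fin k) := Finset.univ.filter (fun t => (t : ℕ) < n)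

/-- The bundle of agent `i` in the allocation determined by the choice sequence `σ`,
restricted to days of index `< n`. -/
def prefAlloc (B B' : Fin k → Fin 2 → Finset G) (σ : Fin k → Bool) (n : ℕ) (i : Fin 2) :
    Finset G := (prefSet k n).biUnion (fun t => dayAlloc B B' (σ t) t i)

/-- Advantage of agent `i` on day `t` under choice `c`. -/
def dGap (v : Fin 2 → G → ℝ) (B B' : Fin k → Fin 2 → Finset G) (c : Bool) (t : Fin k)
    (i : Fin 2) : ℝ :=
  totalVal (v i) (dayAlloc B B' c t i) - totalVal (v i) (dayAlloc B B' c t (1 - i))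

/-- Cumulative advantage of agent `i` on the first `n` days under choice sequence `σ`. -/
def pGap (v : Fin 2 → G → ℝ) (B B' : Fin k → Fin 2 → Finset G) (σ : Fin k → Bool) (n : ℕ)
    (i : Fin 2) : ℝ :=
  totalVal (v i) (prefAlloc B B' σ n i) - totalVal (v i) (prefAlloc B B' σ n (1 - i))

/-- Extend a choice sequence by using `c` on all days of index `≥ n`. -/
def extChoice (σ : Fin k → Bool) (n : ℕ) (c : Bool) : Fin k → Bool :=
  fun s => if (s : ℕ) < n then σ s else c

lemma extChoice_lt {σ : Fin k → Bool} {n : ℕ} {c : Bool} {s : Fin k} (h : (s : ℕ) < n) :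
    extChoice σ n c s = σ s := if_pos h

lemma extChoice_ge {σ : Fin k → Bool} {n : ℕ} {c : Bool} {s : Fin k} (h : ¬ (s : ℕ) < n) :
    extChoice σ n c s = c := if_neg h

lemma mem_prefSet {t : Fin k} {n : ℕ} : t ∈ prefSet k n ↔ (t : ℕ) < n := by
  simp [prefSet]

lemma prefSet_zero : prefSet k 0 = ∅ := by
  ext t; simp [prefSet]

lemma prefSet_succ {n : ℕ} (h : n < k) : prefSet k (n + 1) = insert ⟨n, h⟩ (prefSet k n) := by
  ext s
  simp only [mem_prefSet, Finset.mem_insert, Fin.ext_iff]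
  omega

lemma prefSet_univ : prefSet k k = Finset.univ := by
  ext t; simp [prefSet, t.isLt]

lemma dayAlloc_isAlloc (hB : ∀ t, IsAlloc 2 (M t) (B t)) (hB' : ∀ t, IsAlloc 2 (M t) (B' t))
    (c : Bool) (t : Fin k) : IsAlloc 2 (M t) (dayAlloc B B' c t) := by
  cases c
  · exact hB t
  · exact hB' t

lemma dayAlloc_subset (hB : ∀ t, IsAlloc 2 (M t) (B t)) (hB' : ∀ t, IsAlloc 2 (M t) (B' t))
    (c : Bool) (t : Fin k) (i : Fin 2) : dayAlloc B B' c t i ⊆ M t := by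
  intro g hg
  rw [← (dayAlloc_isAlloc hB hB' c t).2]
  simp only [Finset.mem_biUnion]
  exact ⟨i, Finset.mem_univ i, hg⟩

lemma dayAlloc_cross (hdisj : ∀ t t' : Fin k, t ≠ t' → Disjoint (M t) (M t'))
    (hB : ∀ t, IsAlloc 2 (M t) (B t)) (hB' : ∀ t, IsAlloc 2 (M t) (B' t))
    {t t' : Fin k} (h : t ≠ t') (c c' : Bool) (i i' : Fin 2) :
    Disjoint (dayAlloc B B' c t i) (dayAlloc B B' c' t' i') :=
  (hdisj t t' h).mono (dayAlloc_subset hB hB' c t i) (dayAlloc_subset hB hB' c' t' i')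

lemma prefAlloc_subset (hB : ∀ t, IsAlloc 2 (M t) (B t)) (hB' : ∀ t, IsAlloc 2 (M t) (B' t))
    (σ : Fin k → Bool) (n : ℕ) (i : Fin 2) :
    prefAlloc B B' σ n i ⊆ Finset.univ.biUnion M := by
  intro g hg
  obtain ⟨t, _, hgt⟩ := Finset.mem_biUnion.1 hg
  exact Finset.mem_biUnion.2 ⟨t, Finset.mem_univ t, dayAlloc_subset hB hB' _ t i hgt⟩

lemma disjoint_day_prefAlloc (hdisj : ∀ t t' : Fin k, t ≠ t' → Disjoint (M t) (M t'))
    (hB : ∀ t, IsAlloc 2 (M t) (B t)) (hB' : ∀ t, IsAlloc 2 (M t) (B' t))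
    {n : ℕ} (h : n < k) (c : Bool) (σ : Fin k → Bool) (j j' : Fin 2) :
    Disjoint (dayAlloc B B' c ⟨n, h⟩ j) (prefAlloc B B' σ n j') := by
  rw [prefAlloc, Finset.disjoint_biUnion_right]
  intro t ht
  have htn : (⟨n, h⟩ : Fin k) ≠ t := by
    have := mem_prefSet.1 ht
    intro he
    rw [← he] at this
    exact absurd this (by simp)
  exact dayAlloc_cross hdisj hB hB' htn c (σ t) j j'

lemma prefAlloc_succ {n : ℕ} (h : n < k) (σ : Fin k → Bool) (j : Fin 2) :
    prefAlloc B B' σ (n + 1) j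
      = dayAlloc B B' (σ ⟨n, h⟩) ⟨n, h⟩ j ∪ prefAlloc B B' σ n j := by
  rw [prefAlloc, prefSet_succ h, Finset.biUnion_insert]
  rfl

lemma totalVal_prefAlloc_succ (hdisj : ∀ t t' : Fin k, t ≠ t' → Disjoint (M t) (M t'))
    (hB : ∀ t, IsAlloc 2 (M t) (B t)) (hB' : ∀ t, IsAlloc 2 (M t) (B' t))
    {n : ℕ} (h : n < k) (σ : Fin k → Bool) (i j : Fin 2) :
    totalVal (v i) (prefAlloc B B' σ (n + 1) j)
      = totalVal (v i) (dayAlloc B B' (σ ⟨n, h⟩) ⟨n, h⟩ j)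
        + totalVal (v i) (prefAlloc B B' σ n j) := by
  rw [prefAlloc_succ h σ j,
    totalVal_union _ (disjoint_day_prefAlloc hdisj hB hB' h _ σ j j)]

lemma prefAlloc_congr {σ σ' : Fin k → Bool} (n : ℕ)
    (h : ∀ s : Fin k, (s : ℕ) < n → σ s = σ' s) (i : Fin 2) :
    prefAlloc B B' σ n i = prefAlloc B B' σ' n i :=
  Finset.biUnion_congr rfl (fun t ht => by rw [h t (mem_prefSet.1 ht)])

lemma prefAlloc_ext (σ : Fin k → Bool) (n : ℕ) (c : Bool) (m : ℕ) (hm : m ≤ n) (i : Fin 2) :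
    prefAlloc B B' (extChoice σ n c) m i = prefAlloc B B' σ m i :=
  prefAlloc_congr m (fun s hs => extChoice_lt (lt_of_lt_of_le hs hm)) i

lemma prefAlloc_zero (σ : Fin k → Bool) (i : Fin 2) :
    prefAlloc B B' σ 0 i = (∅ : Finset G) := by
  rw [prefAlloc, prefSet_zero, Finset.biUnion_empty]


/-- Main induction: two candidate choice sequences maintaining the envy-balancing invariant. -/
lemma envy_invariant
    (hdisj : ∀ t t' : Fin k, t ≠ t' → Disjoint (M t) (M t'))
    (hv : ∀ i : Fin 2, ∀ g ∈ Finset.univ.biUnion M, 0 ≤ v i g)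
    (hB : ∀ t, IsAlloc 2 (M t) (B t)) (hB' : ∀ t, IsAlloc 2 (M t) (B' t))
    (hBEF1 : ∀ t, EF1 2 v (B t)) (hB'EF1 : ∀ t, EF1 2 v (B' t))
    (hcancel : ∀ t, ∀ i : Fin 2,
      totalVal (v i) (B t (1 - i)) + totalVal (v i) (B' t (1 - i)) ≤
        totalVal (v i) (B t i) + totalVal (v i) (B' t i)) :
    ∀ n, n ≤ k → ∃ σ0 σ1 : Fin k → Bool,
      (∀ m, m ≤ n → ∀ i : Fin 2,
        numEF1 (v i) (prefAlloc B B' σ0 m i) (prefAlloc B B' σ0 m (1 - i))) ∧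
      (∀ m, m ≤ n → ∀ i : Fin 2,
        numEF1 (v i) (prefAlloc B B' σ1 m i) (prefAlloc B B' σ1 m (1 - i))) ∧
      0 ≤ pGap v B B' σ0 n 0 ∧ 0 ≤ pGap v B B' σ1 n 1 ∧
      (∀ i : Fin 2, 0 ≤ pGap v B B' σ0 n i + pGap v B B' σ1 n i) := by
  intro n
  induction n with
  | zero =>
    intro _
    have hz : ∀ (σ : Fin k → Bool) (i : Fin 2), pGap v B B' σ 0 i = 0 := by
      intro σ i
      simp only [pGap, prefAlloc_zero, totalVal_empty]
      ring
    have hze : ∀ (σ : Fin k → Bool) (m : ℕ), m ≤ 0 → ∀ i : Fin 2,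
        numEF1 (v i) (prefAlloc B B' σ m i) (prefAlloc B B' σ m (1 - i)) := by
      intro σ m hm i
      rw [Nat.le_zero] at hm
      subst hm
      left
      rw [prefAlloc_zero, prefAlloc_zero]
    refine ⟨fun _ => false, fun _ => false, hze _, hze _, ?_, ?_, ?_⟩
    · rw [hz]
    · rw [hz]
    · intro i
      simp [hz]
  | succ n ih =>
    intro hn1
    have hnk : n < k := Nat.lt_of_succ_le hn1
    obtain ⟨σ0, σ1, ha0, ha1, hb0, hb1, hc⟩ := ih (Nat.le_of_lt hnk)
    have hgc : ∀ (σ : Fin k → Bool) (c : Bool), extChoice σ n c ⟨n, hnk⟩ = c :=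
      fun σ c => extChoice_ge (Nat.lt_irrefl n)
    have dayEF1 : ∀ (c : Bool) (i : Fin 2),
        numEF1 (v i) (dayAlloc B B' c ⟨n, hnk⟩ i) (dayAlloc B B' c ⟨n, hnk⟩ (1 - i)) := by
      intro c i
      by_cases hop : dayAlloc B B' c ⟨n, hnk⟩ (1 - i) = ∅
      · left
        rw [hop, totalVal_empty]
        refine totalVal_nonneg _ (fun g hg => hv i g ?_)
        simp only [Finset.mem_biUnion]
        exact ⟨⟨n, hnk⟩, Finset.mem_univ _, dayAlloc_subset hB hB' c _ i hg⟩
      · have hE : EF1 2 v (dayAlloc B B' c ⟨n, hnk⟩) := by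
          cases c
          · exact hBEF1 _
          · exact hB'EF1 _
        obtain ⟨g, hg, hle⟩ := hE i (1 - i) hop
        right
        exact ⟨g, hg, by rw [← totalVal_erase _ hg]; exact hle⟩
    have hcanc : ∀ i : Fin 2,
        0 ≤ dGap v B B' false ⟨n, hnk⟩ i + dGap v B B' true ⟨n, hnk⟩ i := by
      intro i
      have h := hcancel ⟨n, hnk⟩ i
      simp only [dGap, dayAlloc]
      linarith
    have pGapext : ∀ (σ : Fin k → Bool) (c : Bool) (i : Fin 2),
        pGap v B B' (extChoice σ n c) (n + 1) i
          = dGap v B B' c ⟨n, hnk⟩ i + pGap v B B' σ n i := by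
      intro σ c i
      simp only [pGap, dGap]
      rw [totalVal_prefAlloc_succ hdisj hB hB' hnk _ i i,
        totalVal_prefAlloc_succ hdisj hB hB' hnk _ i (1 - i),
        hgc σ c, prefAlloc_ext σ n c n le_rfl i, prefAlloc_ext σ n c n le_rfl (1 - i)]
      ring
    have hext_ef : ∀ (σ : Fin k → Bool) (c : Bool) (m : ℕ), m ≤ n →
        (∀ i : Fin 2, numEF1 (v i) (prefAlloc B B' σ m i) (prefAlloc B B' σ m (1 - i))) →
        ∀ i : Fin 2, numEF1 (v i) (prefAlloc B B' (extChoice σ n c) m i)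
          (prefAlloc B B' (extChoice σ n c) m (1 - i)) := by
      intro σ c m hm hp i
      rw [prefAlloc_ext σ n c m hm i, prefAlloc_ext σ n c m hm (1 - i)]
      exact hp i
    have key : ∀ (σ : Fin k → Bool) (c : Bool) (i : Fin 2),
        numEF1 (v i) (prefAlloc B B' σ n i) (prefAlloc B B' σ n (1 - i)) →
        (0 ≤ dGap v B B' c ⟨n, hnk⟩ i ∨ 0 ≤ pGap v B B' σ n i) →
        numEF1 (v i) (prefAlloc B B' (extChoice σ n c) (n + 1) i)
          (prefAlloc B B' (extChoice σ n c) (n + 1) (1 - i)) := by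
      intro σ c i hpre hor
      have he : ∀ j : Fin 2, prefAlloc B B' (extChoice σ n c) (n + 1) j
          = dayAlloc B B' c ⟨n, hnk⟩ j ∪ prefAlloc B B' σ n j := by
        intro j
        rw [prefAlloc_succ hnk _ j, hgc σ c, prefAlloc_ext σ n c n le_rfl j]
      rw [he i, he (1 - i)]
      have hd1 : Disjoint (dayAlloc B B' c ⟨n, hnk⟩ i) (prefAlloc B B' σ n i) :=
        disjoint_day_prefAlloc hdisj hB hB' hnk c σ i i
      have hd2 : Disjoint (dayAlloc B B' c ⟨n, hnk⟩ (1 - i)) (prefAlloc B B' σ n (1 - i)) :=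
        disjoint_day_prefAlloc hdisj hB hB' hnk c σ (1 - i) (1 - i)
      rcases hor with hd | hp
      · rw [Finset.union_comm (dayAlloc B B' c ⟨n, hnk⟩ i) _,
          Finset.union_comm (dayAlloc B B' c ⟨n, hnk⟩ (1 - i)) _]
        refine numEF1_glue _ hpre ?_ hd1.symm hd2.symm
        simp only [dGap] at hd
        linarith
      · refine numEF1_glue _ (dayEF1 c i) ?_ hd1 hd2
        simp only [pGap] at hp
        linarith
    by_cases hEF : ∃ c, 0 ≤ dGap v B B' c ⟨n, hnk⟩ 0 ∧ 0 ≤ dGap v B B' c ⟨n, hnk⟩ 1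
    · obtain ⟨c, hd0, hd1⟩ := hEF
      have hdall : ∀ i : Fin 2, 0 ≤ dGap v B B' c ⟨n, hnk⟩ i := fin2_cases hd0 hd1
      refine ⟨extChoice σ0 n c, extChoice σ1 n c, ?_, ?_, ?_, ?_, ?_⟩
      · intro m hm
        rcases eq_or_lt_of_le hm with h | h
        · subst h
          intro i
          exact key σ0 c i (ha0 n le_rfl i) (Or.inl (hdall i))
        · exact hext_ef σ0 c m (Nat.lt_succ_iff.1 h) (ha0 m (Nat.lt_succ_iff.1 h))
      · intro m hm
        rcases eq_or_lt_of_le hm with h | h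
        · subst h
          intro i
          exact key σ1 c i (ha1 n le_rfl i) (Or.inl (hdall i))
        · exact hext_ef σ1 c m (Nat.lt_succ_iff.1 h) (ha1 m (Nat.lt_succ_iff.1 h))
      · rw [pGapext σ0 c 0]
        have := hdall 0
        linarith
      · rw [pGapext σ1 c 1]
        have := hdall 1
        linarith
      · intro i
        rw [pGapext σ0 c i, pGapext σ1 c i]
        have h1 := hc i
        have h2 := hdall i
        linarith
    · push_neg at hEF
      obtain ⟨cx, hx⟩ : ∃ c, 0 ≤ dGap v B B' c ⟨n, hnk⟩ 0 := by
        rcases le_or_gt 0 (dGap v B B' false ⟨n, hnk⟩ 0) with h | h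
        · exact ⟨false, h⟩
        · exact ⟨true, by linarith [hcanc 0]⟩
      obtain ⟨cy, hy⟩ : ∃ c, 0 ≤ dGap v B B' c ⟨n, hnk⟩ 1 := by
        rcases le_or_gt 0 (dGap v B B' false ⟨n, hnk⟩ 1) with h | h
        · exact ⟨false, h⟩
        · exact ⟨true, by linarith [hcanc 1]⟩
      have hxy : cx ≠ cy := by
        intro he
        have hlt := hEF cx hx
        rw [he] at hlt
        exact absurd hy (not_le.2 hlt)
      have hsum : ∀ i : Fin 2,
          0 ≤ dGap v B B' cx ⟨n, hnk⟩ i + dGap v B B' cy ⟨n, hnk⟩ i := by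
        intro i
        cases cx <;> cases cy
        · exact absurd rfl hxy
        · exact hcanc i
        · linarith [hcanc i]
        · exact absurd rfl hxy
      have hpe0 : ∀ m, m ≤ n + 1 → ∀ i : Fin 2,
          numEF1 (v i) (prefAlloc B B' (extChoice σ0 n cy) m i)
            (prefAlloc B B' (extChoice σ0 n cy) m (1 - i)) := by
        intro m hm
        rcases eq_or_lt_of_le hm with h | h
        · subst h
          intro i
          exact key σ0 cy i (ha0 n le_rfl i)
            (fin2_cases (P := fun i => 0 ≤ dGap v B B' cy ⟨n, hnk⟩ i ∨ 0 ≤ pGap v B B' σ0 n i)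
              (Or.inr hb0) (Or.inl hy) i)
        · exact hext_ef σ0 cy m (Nat.lt_succ_iff.1 h) (ha0 m (Nat.lt_succ_iff.1 h))
      have hpe1 : ∀ m, m ≤ n + 1 → ∀ i : Fin 2,
          numEF1 (v i) (prefAlloc B B' (extChoice σ1 n cx) m i)
            (prefAlloc B B' (extChoice σ1 n cx) m (1 - i)) := by
        intro m hm
        rcases eq_or_lt_of_le hm with h | h
        · subst h
          intro i
          exact key σ1 cx i (ha1 n le_rfl i)
            (fin2_cases (P := fun i => 0 ≤ dGap v B B' cx ⟨n, hnk⟩ i ∨ 0 ≤ pGap v B B' σ1 n i)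
              (Or.inl hx) (Or.inr hb1) i)
        · exact hext_ef σ1 cx m (Nat.lt_succ_iff.1 h) (ha1 m (Nat.lt_succ_iff.1 h))
      have hsumtot : ∀ i : Fin 2,
          0 ≤ pGap v B B' (extChoice σ0 n cy) (n + 1) i
            + pGap v B B' (extChoice σ1 n cx) (n + 1) i := by
        intro i
        rw [pGapext σ0 cy i, pGapext σ1 cx i]
        have h1 := hc i
        have h2 := hsum i
        linarith
      by_cases hA : 0 ≤ pGap v B B' (extChoice σ0 n cy) (n + 1) 0
          ∧ 0 ≤ pGap v B B' (extChoice σ0 n cy) (n + 1) 1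
      · refine ⟨extChoice σ0 n cy, extChoice σ0 n cy, hpe0, hpe0, hA.1, hA.2, ?_⟩
        intro i
        have := fin2_cases (P := fun i => 0 ≤ pGap v B B' (extChoice σ0 n cy) (n + 1) i)
          hA.1 hA.2 i
        linarith
      · by_cases hBB : 0 ≤ pGap v B B' (extChoice σ1 n cx) (n + 1) 0
            ∧ 0 ≤ pGap v B B' (extChoice σ1 n cx) (n + 1) 1
        · refine ⟨extChoice σ1 n cx, extChoice σ1 n cx, hpe1, hpe1, hBB.1, hBB.2, ?_⟩
          intro i
          have := fin2_cases (P := fun i => 0 ≤ pGap v B B' (extChoice σ1 n cx) (n + 1) i)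
            hBB.1 hBB.2 i
          linarith
        · have harith : (0 ≤ pGap v B B' (extChoice σ0 n cy) (n + 1) 0
              ∧ 0 ≤ pGap v B B' (extChoice σ1 n cx) (n + 1) 1)
              ∨ (0 ≤ pGap v B B' (extChoice σ1 n cx) (n + 1) 0
                ∧ 0 ≤ pGap v B B' (extChoice σ0 n cy) (n + 1) 1) := by
            rcases le_or_gt 0 (pGap v B B' (extChoice σ0 n cy) (n + 1) 0) with h0 | h0
            · left
              refine ⟨h0, ?_⟩
              have ha1' : ¬ 0 ≤ pGap v B B' (extChoice σ0 n cy) (n + 1) 1 :=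
                fun hcon => hA ⟨h0, hcon⟩
              have h2 := hsumtot 1
              linarith [not_le.1 ha1']
            · right
              have hbb0 : 0 ≤ pGap v B B' (extChoice σ1 n cx) (n + 1) 0 := by
                have := hsumtot 0
                linarith
              refine ⟨hbb0, ?_⟩
              have hb1' : ¬ 0 ≤ pGap v B B' (extChoice σ1 n cx) (n + 1) 1 :=
                fun hcon => hBB ⟨hbb0, hcon⟩
              have h2 := hsumtot 1
              linarith [not_le.1 hb1']
          rcases harith with ⟨h1, h2⟩ | ⟨h1, h2⟩
          · exact ⟨extChoice σ0 n cy, extChoice σ1 n cx, hpe0, hpe1, h1, h2, hsumtot⟩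
          · refine ⟨extChoice σ1 n cx, extChoice σ0 n cy, hpe1, hpe0, h1, h2, ?_⟩
            intro i
            have := hsumtot i
            linarith

end EnvyBalancingAux


/-- **Envy-Balancing Lemma.** In a temporal fair division instance with two
agents, suppose on each day `t` we are given two EF1 allocations `B t` and `B' t` of the
goods `M t` that cancel out.  Then there is an allocation `A` of all goods that is EF1 up
to each day and agrees with `B t` or `B' t` on each day `t`. -/
theorem envy_balancing
    {G : Type*} [DecidableEq G] (k : ℕ)
    (M : Fin k → Finset G)
    (hdisj : ∀ t t' : Fin k, t ≠ t' → Disjoint (M t) (M t'))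
    (v : Fin 2 → G → ℝ)
    (hv : ∀ i : Fin 2, ∀ g ∈ Finset.univ.biUnion M, 0 ≤ v i g)
    (B B' : Fin k → Fin 2 → Finset G)
    (hB : ∀ t, IsAlloc 2 (M t) (B t)) (hB' : ∀ t, IsAlloc 2 (M t) (B' t))
    (hBEF1 : ∀ t, EF1 2 v (B t)) (hB'EF1 : ∀ t, EF1 2 v (B' t))
    (hcancel : ∀ t, ∀ i : Fin 2,
      totalVal (v i) (B t (1 - i)) + totalVal (v i) (B' t (1 - i)) ≤
        totalVal (v i) (B t i) + totalVal (v i) (B' t i)) :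
    ∃ A : Fin 2 → Finset G,
      IsAlloc 2 (Finset.univ.biUnion M) A ∧
      (∀ t : Fin k, (fun i => A i ∩ M t) = B t ∨ (fun i => A i ∩ M t) = B' t) ∧
      (∀ t : Fin k, EF1 2 v (fun i => A i ∩ upTo M t)) := by
  obtain ⟨σ0, σ1, ha0, -, -, -, -⟩ :=
    envy_invariant hdisj hv hB hB' hBEF1 hB'EF1 hcancel k le_rfl
  refine ⟨fun i => prefAlloc B B' σ0 k i, ⟨?_, ?_⟩, ?_, ?_⟩
  · -- pairwise disjointness
    intro i j hij
    show Disjoint (prefAlloc B B' σ0 k i) (prefAlloc B B' σ0 k j)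
    unfold prefAlloc
    rw [Finset.disjoint_biUnion_left]
    intro s hs
    rw [Finset.disjoint_biUnion_right]
    intro s' hs'
    by_cases h : s = s'
    · subst h
      exact (dayAlloc_isAlloc hB hB' (σ0 s) s).1 i j hij
    · exact dayAlloc_cross hdisj hB hB' h _ _ i j
  · -- the union is all goods
    ext g
    simp only [Finset.mem_biUnion, Finset.mem_univ, true_and]
    constructor
    · rintro ⟨i, hi⟩
      simp only [prefAlloc, Finset.mem_biUnion] at hi
      obtain ⟨s, _, hgs⟩ := hi
      exact ⟨s, dayAlloc_subset hB hB' _ s i hgs⟩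
    · rintro ⟨s, hgs⟩
      rw [← (dayAlloc_isAlloc hB hB' (σ0 s) s).2] at hgs
      simp only [Finset.mem_biUnion, Finset.mem_univ, true_and] at hgs
      obtain ⟨i, hi⟩ := hgs
      refine ⟨i, ?_⟩
      simp only [prefAlloc, Finset.mem_biUnion]
      exact ⟨s, mem_prefSet.2 s.isLt, hi⟩
  · -- each day's allocation is B t or B' t
    intro t
    have hday : ∀ i : Fin 2,
        prefAlloc B B' σ0 k i ∩ M t = dayAlloc B B' (σ0 t) t i := by
      intro i
      ext g
      simp only [Finset.mem_inter, prefAlloc, Finset.mem_biUnion]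
      constructor
      · rintro ⟨⟨s, _, hgs⟩, hgM⟩
        by_cases hst : s = t
        · subst hst
          exact hgs
        · exact absurd hgM
            (Finset.disjoint_left.1 (hdisj s t hst)
              (dayAlloc_subset hB hB' _ s i hgs))
      · intro hg
        exact ⟨⟨t, mem_prefSet.2 t.isLt, hg⟩, dayAlloc_subset hB hB' _ t i hg⟩
    cases hs : σ0 t
    · left
      funext i
      show prefAlloc B B' σ0 k i ∩ M t = B t i
      rw [hday i, hs]
      rfl
    · right
      funext i
      show prefAlloc B B' σ0 k i ∩ M t = B' t i
      rw [hday i, hs]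
      rfl
  · -- EF1 up to each day
    intro t
    have hupto : ∀ i : Fin 2,
        prefAlloc B B' σ0 k i ∩ upTo M t = prefAlloc B B' σ0 ((t : ℕ) + 1) i := by
      intro i
      ext g
      simp only [Finset.mem_inter, prefAlloc, Finset.mem_biUnion, upTo, Finset.mem_Iic,
        mem_prefSet]
      constructor
      · rintro ⟨⟨s, _, hgs⟩, s', hs', hgM⟩
        by_cases hss : s = s'
        · subst hss
          exact ⟨s, Nat.lt_succ_of_le (Fin.le_def.1 hs'), hgs⟩
        · exact absurd hgM
            (Finset.disjoint_left.1 (hdisj s s' hss)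
              (dayAlloc_subset hB hB' _ s i hgs))
      · rintro ⟨s, hs, hgs⟩
        have hsle : s ≤ t := Fin.le_def.2 (Nat.lt_succ_iff.1 hs)
        exact ⟨⟨s, s.isLt, hgs⟩, s, hsle, dayAlloc_subset hB hB' _ s i hgs⟩
    have hfun : (fun i : Fin 2 => prefAlloc B B' σ0 k i ∩ upTo M t)
        = fun i => prefAlloc B B' σ0 ((t : ℕ) + 1) i := funext hupto
    show EF1 2 v (fun i : Fin 2 => prefAlloc B B' σ0 k i ∩ upTo M t)
    rw [hfun]
    refine EF1_of_numEF1 v _ ?_ ?_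
    · intro i j g hg
      exact hv i g (prefAlloc_subset hB hB' σ0 _ j hg)
    · intro i
      exact ha0 ((t : ℕ) + 1) (Nat.succ_le_of_lt t.isLt) i
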